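/- Three-eighths-rule limit of the cubic Filon coefficients: with z ∈ ℂ \ {0} and Δt > 0, define q₄(z) = Δt(2z²e^{−3z} + 6z e^{−3z} + 6e^{−3z} + 6z³ + 12z − 11z² − 6)/(6z⁴), q₅(z) = Δt(−3z²e^{−3z} − 8z e^{−3z} − 6e^{−3z} + 6z² − 10z + 6)/(2z⁴), q₆(z) = Δt(6z²e^{−3z} + 10z e^{−3z} + 6e^{−3z} − 3z² + 8z − 6)/(2z⁴), q₇(z) = Δt(−6z³e^{−3z} − 11z²e^{−3z} − 12z e^{−3z} − 6e^{−3z} + 2z² − 6z + 6)/(6z⁴). Then as z → 0 one has q₄(z) → 3Δt/8, q₅(z) → 9Δt/8, q₆(z) → 9Δt/8, and q₇(z) → 3Δt/8 (the Newton–Cotes 3/8 weights). -/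

import Mathlib

open Filter Complex


noncomputable def Pquart (z : ℂ) : ℂ := 1 + (-3)*z + 9/2*z^2 + (-9/2)*z^3 + 27/8*z^4

lemma key : Tendsto (fun z : ℂ => (Complex.exp ((-3)*z) - Pquart z)/z^4)
    (nhdsWithin 0 {(0:ℂ)}ᶜ) (nhds 0) := by
  apply squeeze_zero_norm' (a := fun z : ℂ => (243/100) * ‖z‖)
  · have hball : ∀ᶠ z : ℂ in nhdsWithin 0 {(0:ℂ)}ᶜ, ‖z‖ < 1/3 := by
      apply eventually_nhdsWithin_of_eventually_nhds
      filter_upwards [Metric.ball_mem_nhds (0:ℂ) (by norm_num : (0:ℝ) < 1/3)] with z hz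
      simpa [Metric.mem_ball, dist_zero_right] using hz
    filter_upwards [hball, self_mem_nhdsWithin] with z hz hz0
    have hz0' : z ≠ 0 := hz0
    have hx : ‖((-3)*z)‖ ≤ 1 := by
      rw [norm_mul]
      simp only [norm_neg]
      have : ‖z‖ < 1/3 := hz
      have : ‖(3 : ℂ)‖ = 3 := by norm_num
      rw [this]
      nlinarith [norm_nonneg z]
    have hb := Complex.exp_bound hx (by norm_num : 0 < 5)
    have hsum : (∑ m ∈ Finset.range 5, ((-3)*z) ^ m / m.factorial) = Pquart z := by
      simp [Finset.sum_range_succ, Nat.factorial, Pquart]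
      ring
    rw [hsum] at hb
    have habs : ‖((-3)*z)‖ = 3 * ‖z‖ := by
      rw [norm_mul]; simp only [norm_neg]; norm_num
    rw [habs] at hb
    have hz4 : ‖(fun z : ℂ => (Complex.exp ((-3)*z) - Pquart z)/z^4) z‖
        = ‖(Complex.exp ((-3)*z) - Pquart z)‖ / (‖z‖)^4 := by
      simp [norm_div, norm_pow]
    rw [hz4]
    have hzpos : 0 < ‖z‖ := norm_pos_iff.mpr hz0'
    rw [div_le_iff₀ (by positivity)]
    norm_num [Nat.factorial] at hb
    calc ‖(Complex.exp ((-3)*z) - Pquart z)‖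
        ≤ (3 * ‖z‖)^5 * (1/100) := by simpa [neg_mul] using hb
      _ = 243/100 * ‖z‖ * (‖z‖)^4 := by ring
      _ = 243/100 * ‖z‖ * (‖z‖)^4 := rfl
  · have : Tendsto (fun z : ℂ => (243/100) * ‖z‖) (nhds 0) (nhds 0) := by
      have h : Tendsto (fun z : ℂ => (243/100 : ℝ) * ‖z‖) (nhds 0) (nhds ((243/100 : ℝ) * ‖(0:ℂ)‖)) :=
        ((continuous_const.mul (continuous_norm (E := ℂ))).tendsto 0)
      simpa using h
    exact this.mono_left nhdsWithin_le_nhds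

lemma filon_aux (C L : ℂ) (p q : ℂ → ℂ) (hp : Continuous p) (hq : Continuous q)
    (hL : C * p 0 = L) :
    Tendsto (fun z : ℂ => C * (p z + q z * ((Complex.exp ((-3)*z) - Pquart z)/z^4)))
      (nhdsWithin 0 {(0:ℂ)}ᶜ) (nhds L) := by
  have h1 : Tendsto p (nhdsWithin 0 {(0:ℂ)}ᶜ) (nhds (p 0)) :=
    (hp.tendsto 0).mono_left nhdsWithin_le_nhds
  have h2 : Tendsto q (nhdsWithin 0 {(0:ℂ)}ᶜ) (nhds (q 0)) :=
    (hq.tendsto 0).mono_left nhdsWithin_le_nhds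
  have h3 := (tendsto_const_nhds (x := C)).mul (h1.add (h2.mul key))
  simpa [hL] using h3

/-- Three-eighths-rule limit of the cubic Filon coefficients as `z → 0`. -/
theorem cubic_filon_coeffs_three_eighths_limit (Δt : ℝ) (hΔt : 0 < Δt) :
    Tendsto (fun z : ℂ => (Δt : ℂ) * (2 * z ^ 2 * Complex.exp (-3 * z)
        + 6 * z * Complex.exp (-3 * z) + 6 * Complex.exp (-3 * z)
        + 6 * z ^ 3 + 12 * z - 11 * z ^ 2 - 6) / (6 * z ^ 4))
      (nhdsWithin 0 {(0 : ℂ)}ᶜ) (nhds (3 * (Δt : ℂ) / 8)) ∧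
    Tendsto (fun z : ℂ => (Δt : ℂ) * (-3 * z ^ 2 * Complex.exp (-3 * z)
        - 8 * z * Complex.exp (-3 * z) - 6 * Complex.exp (-3 * z)
        + 6 * z ^ 2 - 10 * z + 6) / (2 * z ^ 4))
      (nhdsWithin 0 {(0 : ℂ)}ᶜ) (nhds (9 * (Δt : ℂ) / 8)) ∧
    Tendsto (fun z : ℂ => (Δt : ℂ) * (6 * z ^ 2 * Complex.exp (-3 * z)
        + 10 * z * Complex.exp (-3 * z) + 6 * Complex.exp (-3 * z)
        - 3 * z ^ 2 + 8 * z - 6) / (2 * z ^ 4))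
      (nhdsWithin 0 {(0 : ℂ)}ᶜ) (nhds (9 * (Δt : ℂ) / 8)) ∧
    Tendsto (fun z : ℂ => (Δt : ℂ) * (-6 * z ^ 3 * Complex.exp (-3 * z)
        - 11 * z ^ 2 * Complex.exp (-3 * z) - 12 * z * Complex.exp (-3 * z)
        - 6 * Complex.exp (-3 * z) + 2 * z ^ 2 - 6 * z + 6) / (6 * z ^ 4))
      (nhdsWithin 0 {(0 : ℂ)}ᶜ) (nhds (3 * (Δt : ℂ) / 8)) := by
  refine ⟨?_, ?_, ?_, ?_⟩
  · refine Tendsto.congr' ?_ (filon_aux ((Δt:ℂ)/6) (3*(Δt:ℂ)/8)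
      (fun z => 9/4 + 45/4*z + 27/4*z^2) (fun z => 2*z^2+6*z+6)
      (by continuity) (by continuity) (by push_cast; ring))
    filter_upwards [self_mem_nhdsWithin] with z hz
    have hz : z ≠ 0 := hz
    have h2 : z^4 ≠ 0 := pow_ne_zero _ hz
    have h1 : (6:ℂ) * z^4 ≠ 0 := mul_ne_zero (by norm_num) h2
    have h1' : (2:ℂ) * z^4 ≠ 0 := mul_ne_zero (by norm_num) h2
    rw [show ∀ p q s : ℂ, p + q * (s/z^4) = (p * z^4 + q * s)/z^4 from
      fun p q s => by field_simp, mul_div_assoc', div_eq_div_iff h2 (by first | exact h1 | exact h1')]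
    simp only [Pquart]
    ring
  · refine Tendsto.congr' ?_ (filon_aux ((Δt:ℂ)/2) (9*(Δt:ℂ)/8)
      (fun z => 9/4 - 27/2*z - 81/8*z^2) (fun z => -3*z^2-8*z-6)
      (by continuity) (by continuity) (by push_cast; ring))
    filter_upwards [self_mem_nhdsWithin] with z hz
    have hz : z ≠ 0 := hz
    have h2 : z^4 ≠ 0 := pow_ne_zero _ hz
    have h1 : (6:ℂ) * z^4 ≠ 0 := mul_ne_zero (by norm_num) h2
    have h1' : (2:ℂ) * z^4 ≠ 0 := mul_ne_zero (by norm_num) h2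
    rw [show ∀ p q s : ℂ, p + q * (s/z^4) = (p * z^4 + q * s)/z^4 from
      fun p q s => by field_simp, mul_div_assoc', div_eq_div_iff h2 (by first | exact h1 | exact h1')]
    simp only [Pquart]
    ring
  · refine Tendsto.congr' ?_ (filon_aux ((Δt:ℂ)/2) (9*(Δt:ℂ)/8)
      (fun z => 9/4 + 27/4*z + 81/4*z^2) (fun z => 6*z^2+10*z+6)
      (by continuity) (by continuity) (by push_cast; ring))
    filter_upwards [self_mem_nhdsWithin] with z hz
    have hz : z ≠ 0 := hz
    have h2 : z^4 ≠ 0 := pow_ne_zero _ hz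
    have h1 : (6:ℂ) * z^4 ≠ 0 := mul_ne_zero (by norm_num) h2
    have h1' : (2:ℂ) * z^4 ≠ 0 := mul_ne_zero (by norm_num) h2
    rw [show ∀ p q s : ℂ, p + q * (s/z^4) = (p * z^4 + q * s)/z^4 from
      fun p q s => by field_simp, mul_div_assoc', div_eq_div_iff h2 (by first | exact h1 | exact h1')]
    simp only [Pquart]
    ring
  · refine Tendsto.congr' ?_ (filon_aux ((Δt:ℂ)/6) (3*(Δt:ℂ)/8)
      (fun z => 9/4 - 18*z - 81/8*z^2 - 81/4*z^3) (fun z => -6*z^3-11*z^2-12*z-6)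
      (by continuity) (by continuity) (by push_cast; ring))
    filter_upwards [self_mem_nhdsWithin] with z hz
    have hz : z ≠ 0 := hz
    have h2 : z^4 ≠ 0 := pow_ne_zero _ hz
    have h1 : (6:ℂ) * z^4 ≠ 0 := mul_ne_zero (by norm_num) h2
    have h1' : (2:ℂ) * z^4 ≠ 0 := mul_ne_zero (by norm_num) h2
    rw [show ∀ p q s : ℂ, p + q * (s/z^4) = (p * z^4 + q * s)/z^4 from
      fun p q s => by field_simp, mul_div_assoc', div_eq_div_iff h2 (by first | exact h1 | exact h1')]
    simp only [Pquart]
    ring
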